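/- Linearizing the equation (p^I)' = -γ p^I + r p^I p^S (α g_αα(α,θ)/g_α(α,θ)) - r p^I (1 - p^I) at t = 0 with initial conditions I₀ = ε, S₀ = 1-ε, p^I₀ = ε/(1-ε), p^S₀ = (1-2ε)/(1-ε), α₀ = θ₀ = 1: the derivative (p^I)'(0) is positive for all sufficiently small ε > 0 if and only if r (g_αα(1,1)/g_α(1,1) - 1) > γ, equivalently (r/(r+γ)) · g_αα(1,1)/g_α(1,1) > 1. -/

import Mathlib

open Set Filter Topology in
/-- Epidemic threshold: with initial conditions `p^I₀ = ε/(1-ε)`, `p^S₀ = (1-2ε)/(1-ε)`,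
`α₀ = θ₀ = 1`, the linearized derivative
`(p^I)'(0) = -γ p^I₀ + r p^I₀ p^S₀ (g_αα(1,1)/g_α(1,1)) - r p^I₀ (1 - p^I₀)`
is positive for all sufficiently small `ε > 0` iff `r (g_αα(1,1)/g_α(1,1) - 1) > γ`. -/
theorem stmt_7 (s : Finset ℕ) (μ₀ : ℕ → ℝ) (hμ : ∀ k, 0 ≤ μ₀ k)
    (r γ : ℝ) (hr : 0 < r) (hγ : 0 < γ)
    (gα gαα : ℝ)
    (hgα : gα = ∑ k ∈ s, (k : ℝ) * μ₀ k)
    (hgαα : gαα = ∑ k ∈ s, (k : ℝ) * ((k : ℝ) - 1) * μ₀ k)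
    (hgαpos : 0 < gα) :
    (∀ᶠ ε in 𝓝[>] (0:ℝ),
        0 < -γ * (ε / (1 - ε))
            + r * (ε / (1 - ε)) * ((1 - 2 * ε) / (1 - ε)) * (gαα / gα)
            - r * (ε / (1 - ε)) * (1 - ε / (1 - ε)))
      ↔ r * (gαα / gα - 1) > γ := by
  set c : ℝ := gαα / gα with hc
  set A : ℝ := r * (c - 1) - γ with hA
  have key : ∀ ε : ℝ, ε < 1 →
      -γ * (ε / (1 - ε)) + r * (ε / (1 - ε)) * ((1 - 2 * ε) / (1 - ε)) * c
        - r * (ε / (1 - ε)) * (1 - ε / (1 - ε))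
      = (ε / (1 - ε)) * (A - (A + γ) * (ε / (1 - ε))) := by
    intro ε hε
    have h1 : (1 - ε) ≠ 0 := by intro h; linarith
    rw [hA]
    field_simp
    ring
  constructor
  · intro h
    by_contra hA0
    push_neg at hA0
    have hA' : A ≤ 0 := by rw [hA]; linarith
    have hneg : ∀ᶠ ε in 𝓝[>] (0:ℝ),
        ¬ (0 < -γ * (ε / (1 - ε))
            + r * (ε / (1 - ε)) * ((1 - 2 * ε) / (1 - ε)) * c
            - r * (ε / (1 - ε)) * (1 - ε / (1 - ε))) := by
      filter_upwards [Ioo_mem_nhdsGT_of_mem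
        (by norm_num : (0:ℝ) ∈ Ico 0 (1/2))] with ε hε
      obtain ⟨hε0, hε1⟩ := hε
      rw [key ε (by linarith)]
      have h1 : (0:ℝ) < 1 - ε := by linarith
      have ht0 : 0 < ε / (1 - ε) := div_pos hε0 h1
      have ht1 : ε / (1 - ε) < 1 := by
        rw [div_lt_one h1]; linarith
      push_neg
      have hB : A - (A + γ) * (ε / (1 - ε)) < 0 := by nlinarith
      nlinarith
    obtain ⟨ε, hpos, hnpos⟩ := (h.and hneg).exists
    exact hnpos hpos
  · intro h
    have hApos : 0 < A := by rw [hA]; linarith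
    have hAg : 0 < A + γ := by linarith
    filter_upwards [Ioo_mem_nhdsGT_of_mem
      (⟨le_refl 0, lt_min (by norm_num) (by positivity)⟩ :
        (0:ℝ) ∈ Ico 0 (min (1/2) (A / (2 * (A + γ)))))] with ε hε
    obtain ⟨hε0, hεδ⟩ := hε
    have hε12 : ε < 1/2 := lt_of_lt_of_le hεδ (min_le_left _ _)
    have hεA : ε < A / (2 * (A + γ)) := lt_of_lt_of_le hεδ (min_le_right _ _)
    rw [key ε (by linarith)]
    have h1 : (0:ℝ) < 1 - ε := by linarith
    have ht0 : 0 < ε / (1 - ε) := div_pos hε0 h1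
    have ht2 : ε / (1 - ε) < 2 * ε := by
      rw [div_lt_iff₀ h1]; nlinarith
    have htA : (A + γ) * (ε / (1 - ε)) < A := by
      have : (A + γ) * (ε / (1 - ε)) < (A + γ) * (2 * ε) := by
        exact mul_lt_mul_of_pos_left ht2 hAg
      have h2 : (A + γ) * (2 * ε) < A := by
        have := (lt_div_iff₀ (by positivity : (0:ℝ) < 2 * (A + γ))).mp hεA
        nlinarith
      exact lt_trans this h2
    have hB : 0 < A - (A + γ) * (ε / (1 - ε)) := by linarith
    exact mul_pos ht0 hB
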